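/- Under Assumptions 1–3, suppose the SOGD iterates w_a, …, w_b (SOGD with parameters δ > 0, α = D/√2 started at round a) satisfy Σ_{u=a}^b f_u(w_u) ≥ C, where C ≥ 20 H D² + 2D√(2δ). Then every comparator w ∈ W satisfies Σ_{u=a}^b f_u(w) ≥ C/4. -/

import Mathlib

open Finset
open scoped RealInnerProductSpace

section SOGDAux

variable {E : Type*} [NormedAddCommGroup E] [InnerProductSpace ℝ E] [FiniteDimensional ℝ E]

/-- derivative of `f` along a line, in terms of the gradient. -/
lemma sogd_hasDerivAt (f : E → ℝ) (hf : Differentiable ℝ f) (x v : E) (t : ℝ) :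
    HasDerivAt (fun s : ℝ => f (x + s • v)) ⟪gradient f (x + t • v), v⟫ t := by
  have hc : HasDerivAt (fun s : ℝ => x + s • v) v t := by
    simpa using ((hasDerivAt_id t).smul_const v).const_add x
  have hg := (hf (x + t • v)).hasGradientAt
  have h2 := hg.hasFDerivAt.comp_hasDerivAt t hc
  simpa [InnerProductSpace.toDual_apply_apply, Function.comp_def] using h2

/-- gradient inequality for convex differentiable functions. -/
lemma sogd_convex_ineq (f : E → ℝ) (hconv : ConvexOn ℝ Set.univ f)
    (hf : Differentiable ℝ f) (x y : E) :
    f x + ⟪gradient f x, y - x⟫ ≤ f y := by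
  have hφ : ConvexOn ℝ Set.univ (fun s : ℝ => f (x + s • (y - x))) := by
    have h := hconv.comp_affineMap (AffineMap.lineMap x y)
    have he : (f ∘ (AffineMap.lineMap x y : ℝ →ᵃ[ℝ] E)) = fun s : ℝ => f (x + s • (y - x)) := by
      funext s
      have hl : (AffineMap.lineMap x y : ℝ →ᵃ[ℝ] E) s = x + s • (y - x) := by
        simp [AffineMap.lineMap_apply_module]
        module
      simp [hl]
    rw [he] at h
    simpa using h
  have hd := sogd_hasDerivAt f hf x (y - x) 0
  simp only [zero_smul, add_zero] at hd
  have hs := hφ.le_slope_of_hasDerivAt (Set.mem_univ (0:ℝ)) (Set.mem_univ (1:ℝ)) zero_lt_one hd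
  rw [slope_def_field] at hs
  simp at hs
  have hfd : ⟪gradient f x, y - x⟫ = fderiv ℝ f x y - fderiv ℝ f x x := by
    simp [inner_sub_right]
  linarith [hs]

/-- descent lemma for `H`-smooth functions. -/
lemma sogd_descent (f : E → ℝ) (hf : Differentiable ℝ f) (H : ℝ)
    (hsm : ∀ p q : E, ‖gradient f p - gradient f q‖ ≤ H * ‖p - q‖) (x v : E) :
    f (x + v) ≤ f x + ⟪gradient f x, v⟫ + H / 2 * ‖v‖ ^ 2 := by
  set c : ℝ := ⟪gradient f x, v⟫ with hc
  set g : ℝ → ℝ := fun t => f (x + t • v) - t * c - H / 2 * ‖v‖ ^ 2 * t ^ 2 with hgdef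
  have hgd : ∀ t : ℝ, HasDerivAt g
      (⟪gradient f (x + t • v), v⟫ - c - H / 2 * ‖v‖ ^ 2 * (2 * t)) t := by
    intro t
    have h1 := sogd_hasDerivAt f hf x v t
    have h2 : HasDerivAt (fun t : ℝ => t * c) c t := by
      simpa using (hasDerivAt_id t).mul_const c
    have h3 : HasDerivAt (fun t : ℝ => H / 2 * ‖v‖ ^ 2 * t ^ 2)
        (H / 2 * ‖v‖ ^ 2 * (2 * t)) t := by
      have hp : HasDerivAt (fun t : ℝ => t ^ 2) (2 * t) t := by
        simpa using hasDerivAt_pow 2 t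
      exact hp.const_mul (H / 2 * ‖v‖ ^ 2)
    exact (h1.sub h2).sub h3
  have hanti : AntitoneOn g (Set.Icc (0:ℝ) 1) := by
    apply antitoneOn_of_deriv_nonpos (convex_Icc 0 1)
    · exact fun t _ => (hgd t).differentiableAt.continuousAt.continuousWithinAt
    · exact fun t _ => ((hgd t).differentiableAt).differentiableWithinAt
    · intro t ht
      rw [interior_Icc] at ht
      rw [(hgd t).deriv]
      have hineq : ⟪gradient f (x + t • v) - gradient f x, v⟫ ≤ H * t * ‖v‖ ^ 2 := by
        calc ⟪gradient f (x + t • v) - gradient f x, v⟫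
            ≤ ‖gradient f (x + t • v) - gradient f x‖ * ‖v‖ := real_inner_le_norm _ _
          _ ≤ H * ‖(x + t • v) - x‖ * ‖v‖ := by
              have := hsm (x + t • v) x
              have hv : (0:ℝ) ≤ ‖v‖ := norm_nonneg _
              nlinarith [norm_nonneg (gradient f (x + t • v) - gradient f x)]
          _ = H * t * ‖v‖ ^ 2 := by
              rw [add_sub_cancel_left, norm_smul, Real.norm_eq_abs, abs_of_pos ht.1]
              ring
      rw [inner_sub_left] at hineq
      linarith
  have h01 := hanti (Set.left_mem_Icc.2 zero_le_one) (Set.right_mem_Icc.2 zero_le_one) zero_le_one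
  simp only [hgdef] at h01
  simp only [one_smul, zero_smul, add_zero, one_pow, mul_one, zero_pow, mul_zero, one_mul,
    zero_mul, sub_zero] at h01
  linarith

/-- self-bounding property of smooth nonnegative functions. -/
lemma sogd_selfbound (f : E → ℝ) (hf : Differentiable ℝ f) (hnn : ∀ x : E, 0 ≤ f x)
    (H : ℝ) (hH : 0 ≤ H)
    (hsm : ∀ p q : E, ‖gradient f p - gradient f q‖ ≤ H * ‖p - q‖) (x : E) :
    ‖gradient f x‖ ^ 2 ≤ 2 * H * f x := by
  have key : ∀ s : ℝ, 0 ≤ f x - s * ‖gradient f x‖ ^ 2 + H / 2 * s ^ 2 * ‖gradient f x‖ ^ 2 := by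
    intro s
    have h := sogd_descent f hf H hsm x (-(s • gradient f x))
    have h1 : ⟪gradient f x, -(s • gradient f x)⟫ = -(s * ‖gradient f x‖ ^ 2) := by
      rw [inner_neg_right, real_inner_smul_right, real_inner_self_eq_norm_sq]
    have h2 : ‖-(s • gradient f x)‖ ^ 2 = s ^ 2 * ‖gradient f x‖ ^ 2 := by
      rw [norm_neg, norm_smul, Real.norm_eq_abs, mul_pow, sq_abs]
    rw [h1, h2] at h
    have := hnn (x + -(s • gradient f x))
    nlinarith
  rcases eq_or_lt_of_le hH with hH0 | hHpos
  · have hg : ‖gradient f x‖ ^ 2 ≤ 0 := by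
      by_contra hcon
      push_neg at hcon
      have := key ((f x + 1) / ‖gradient f x‖ ^ 2)
      rw [← hH0] at this
      field_simp at this
      rw [mul_div_assoc, div_self (fun h => by simp [h] at hcon)] at this
      simp only [zero_mul, zero_div, add_zero, mul_one] at this
      nlinarith
    nlinarith [hnn x, sq_nonneg ‖gradient f x‖]
  · have hH0 : H ≠ 0 := ne_of_gt hHpos
    have h2 : 0 ≤ 2 * H ^ 2 *
        (f x - (1/H) * ‖gradient f x‖ ^ 2 + H / 2 * (1/H) ^ 2 * ‖gradient f x‖ ^ 2) :=
      mul_nonneg (by positivity) (key (1/H))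
    have h3 : 2 * H ^ 2 *
        (f x - (1/H) * ‖gradient f x‖ ^ 2 + H / 2 * (1/H) ^ 2 * ‖gradient f x‖ ^ 2)
        = 2 * H ^ 2 * f x - H * ‖gradient f x‖ ^ 2 := by
      field_simp
      ring
    rw [h3] at h2
    have h4 : H * ‖gradient f x‖ ^ 2 ≤ H * (2 * H * f x) := by nlinarith
    exact (mul_le_mul_iff_right₀ hHpos).mp h4

/-- the metric projection onto a convex set shrinks squared distances to its points. -/
lemma sogd_proj_sq (W : Set E) (hWconvex : Convex ℝ W) (proj : E → E)
    (hproj : ∀ x : E, proj x ∈ W ∧ ∀ y ∈ W, ‖x - proj x‖ ≤ ‖x - y‖)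
    (z x : E) (hx : x ∈ W) : ‖proj z - x‖ ^ 2 ≤ ‖z - x‖ ^ 2 := by
  obtain ⟨hpW, hpmin⟩ := hproj z
  haveI : Nonempty W := ⟨⟨x, hx⟩⟩
  have hinf : ‖z - proj z‖ = ⨅ v : W, ‖z - v‖ := by
    apply le_antisymm
    · exact le_ciInf fun v => hpmin v v.2
    · have hbdd : BddBelow (Set.range fun v : W => ‖z - (v : E)‖) := by
        refine ⟨0, ?_⟩
        rintro r ⟨v, rfl⟩
        exact norm_nonneg _
      exact ciInf_le hbdd ⟨proj z, hpW⟩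
  have hobtuse := (norm_eq_iInf_iff_real_inner_le_zero hWconvex hpW).mp hinf x hx
  have hexp : ‖z - x‖ ^ 2
      = ‖z - proj z‖ ^ 2 + 2 * ⟪z - proj z, proj z - x⟫ + ‖proj z - x‖ ^ 2 := by
    have h : z - x = (z - proj z) + (proj z - x) := by abel
    rw [h, norm_add_sq_real]
    try ring
  have hsign : 0 ≤ ⟪z - proj z, proj z - x⟫ := by
    have h : proj z - x = -(x - proj z) := by abel
    rw [h, inner_neg_right]
    try linarith
  nlinarith [sq_nonneg ‖z - proj z‖]

/-- elementary square-root step inequality. -/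
lemma sogd_sqrt_step (p q : ℝ) (hp : 0 < p) (hpq : p ≤ q) :
    (q - p) / Real.sqrt q ≤ 2 * (Real.sqrt q - Real.sqrt p) := by
  have hq : 0 < q := lt_of_lt_of_le hp hpq
  have h1 : Real.sqrt p ^ 2 = p := Real.sq_sqrt hp.le
  have h2 : Real.sqrt q ^ 2 = q := Real.sq_sqrt hq.le
  have h3 : 0 < Real.sqrt q := Real.sqrt_pos.2 hq
  rw [div_le_iff₀ h3]
  nlinarith [sq_nonneg (Real.sqrt q - Real.sqrt p), Real.sqrt_nonneg p]

end SOGDAux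

set_option maxHeartbeats 2000000 in
/-- If the SOGD iterates (parameters `δ > 0`, `α = D/√2`) started at round `a` accumulate
loss at least `C` over the rounds `a, …, b`, where `C ≥ 20 H D² + 2D√(2δ)`, then every
comparator `x ∈ W` accumulates loss at least `C/4` over the same rounds. -/
theorem stmt_18
    {E : Type*} [NormedAddCommGroup E] [InnerProductSpace ℝ E] [FiniteDimensional ℝ E]
    (W : Set E) (hWne : W.Nonempty) (hWclosed : IsClosed W) (hWconvex : Convex ℝ W)
    -- `proj` is the metric projection onto `W`
    (proj : E → E)
    (hproj : ∀ x : E, proj x ∈ W ∧ ∀ y ∈ W, ‖x - proj x‖ ≤ ‖x - y‖)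
    -- Assumption 1: the diameter of `W` is bounded by `D`
    (D : ℝ) (hdiam : ∀ x ∈ W, ∀ y ∈ W, ‖x - y‖ ≤ D)
    -- Assumption 2: the online functions are convex, differentiable and nonnegative on `E`
    (f : ℕ → E → ℝ)
    (hconv : ∀ t, ConvexOn ℝ Set.univ (f t))
    (hdiff : ∀ t, Differentiable ℝ (f t))
    (hnonneg : ∀ t, ∀ x : E, 0 ≤ f t x)
    -- Assumption 3: the online functions are `H`-smooth
    (H : ℝ) (hH : 0 ≤ H)
    (hsmooth : ∀ t, ∀ x y : E,
      ‖gradient (f t) x - gradient (f t) y‖ ≤ H * ‖x - y‖)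
    -- SOGD with parameters `δ > 0` and `α = D/√2`, started at round `a`
    (δ : ℝ) (hδ : 0 < δ)
    (a b : ℕ) (ha : 1 ≤ a) (hab : a ≤ b)
    (w : ℕ → E) (hwa : w a ∈ W)
    (hwrec : ∀ t ≥ a, w (t + 1) =
      proj (w t - ((D / Real.sqrt 2) /
        Real.sqrt (δ + ∑ u ∈ Finset.Icc a t, ‖gradient (f u) (w u)‖ ^ 2)) •
          gradient (f t) (w t)))
    (C : ℝ) (hC : 20 * H * D ^ 2 + 2 * D * Real.sqrt (2 * δ) ≤ C)
    (hloss : C ≤ ∑ u ∈ Finset.Icc a b, f u (w u)) :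
    ∀ x ∈ W, C / 4 ≤ ∑ u ∈ Finset.Icc a b, f u x := by
  intro x hx
  by_cases hCpos : 0 < C
  swap
  · push_neg at hCpos
    have h0 : (0:ℝ) ≤ ∑ u ∈ Finset.Icc a b, f u x :=
      Finset.sum_nonneg fun u _ => hnonneg u x
    linarith
  -- positivity of D
  have hD0 : 0 ≤ D := le_trans (by simpa using norm_nonneg (x - x)) (hdiam x hx x hx)
  have hWmem : ∀ t, a ≤ t → w t ∈ W := by
    intro t ht
    induction t, ht using Nat.le_induction with
    | base => exact hwa
    | succ n hn ih =>
      rw [hwrec n hn]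
      exact (hproj _).1
  rcases eq_or_lt_of_le hD0 with hD | hDpos
  · -- degenerate case D = 0 : W is a singleton
    have heq : ∀ u ∈ Finset.Icc a b, f u (w u) = f u x := by
      intro u hu
      have huW := hWmem u (Finset.mem_Icc.1 hu).1
      have hle : ‖w u - x‖ ≤ D := hdiam (w u) huW x hx
      have hze : ‖w u - x‖ ≤ 0 := by rw [← hD] at hle; exact hle
      have hwux : w u = x := sub_eq_zero.mp (norm_le_zero_iff.mp hze)
      rw [hwux]
    rw [Finset.sum_congr rfl heq] at hloss
    linarith
  have hs2 : (0:ℝ) < Real.sqrt 2 := Real.sqrt_pos.2 (by norm_num)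
  have h2s : Real.sqrt 2 * Real.sqrt 2 = 2 := Real.mul_self_sqrt (by norm_num)
  set α : ℝ := D / Real.sqrt 2 with hα
  have hαpos : 0 < α := div_pos hDpos hs2
  -- abbreviations
  set G : ℕ → E := fun u => gradient (f u) (w u) with hGdef
  have hG : ∀ u, gradient (f u) (w u) = G u := fun u => rfl
  set S : ℕ → ℝ := fun t => δ + ∑ u ∈ Finset.Icc a t, ‖G u‖ ^ 2 with hSdef
  have hS : ∀ t, δ + ∑ u ∈ Finset.Icc a t, ‖G u‖ ^ 2 = S t := fun t => rfl
  have hSpos : ∀ t, 0 < S t := fun t =>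
    add_pos_of_pos_of_nonneg hδ (Finset.sum_nonneg fun u _ => sq_nonneg _)
  set r : ℕ → ℝ := fun t => Real.sqrt (S t) with hrdef
  have hr : ∀ t, Real.sqrt (S t) = r t := fun t => rfl
  have hrpos : ∀ t, 0 < r t := fun t => Real.sqrt_pos.2 (hSpos t)
  simp only [hG, hS, hr] at hwrec
  -- basic structural facts
  have hSsucc : ∀ n, a ≤ n + 1 → S (n + 1) = S n + ‖G (n + 1)‖ ^ 2 := by
    intro n hn
    simp only [hSdef]
    rw [Finset.sum_Icc_succ_top hn]
    ring
  have hrmono : ∀ n, a ≤ n + 1 → r n ≤ r (n + 1) := by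
    intro n hn
    apply Real.sqrt_le_sqrt
    rw [hSsucc n hn]
    nlinarith [sq_nonneg ‖G (n + 1)‖]
  have hAle : ∀ t, a ≤ t → ‖w t - x‖ ^ 2 ≤ D ^ 2 := by
    intro t ht
    have h := hdiam (w t) (hWmem t ht) x hx
    nlinarith [norm_nonneg (w t - x)]
  -- per-round inequality
  have hstep : ∀ t, a ≤ t →
      f t (w t) - f t x ≤ (‖w t - x‖ ^ 2 - ‖w (t + 1) - x‖ ^ 2) * r t / (2 * α)
        + α / 2 * (‖G t‖ ^ 2 / r t) := by
    intro t ht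
    have hproj2 := sogd_proj_sq W hWconvex proj hproj (w t - (α / r t) • G t) x hx
    rw [← hwrec t ht] at hproj2
    have hexp : ‖w t - (α / r t) • G t - x‖ ^ 2
        = ‖w t - x‖ ^ 2 - 2 * (α / r t) * ⟪G t, w t - x⟫ + (α / r t) ^ 2 * ‖G t‖ ^ 2 := by
      have h1 : w t - (α / r t) • G t - x = (w t - x) - (α / r t) • G t := by abel
      rw [h1, norm_sub_sq_real, real_inner_smul_right, norm_smul, Real.norm_eq_abs,
        mul_pow, sq_abs, real_inner_comm]
      ring
    rw [hexp] at hproj2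
    have hconvex := sogd_convex_ineq (f t) (hconv t) (hdiff t) (w t) x
    rw [hG t] at hconvex
    have hinner : ⟪G t, x - w t⟫ = -⟪G t, w t - x⟫ := by
      have h : x - w t = -(w t - x) := by abel
      rw [h, inner_neg_right]
    rw [hinner] at hconvex
    have hηpos : 0 < α / r t := div_pos hαpos (hrpos t)
    have hI : ⟪G t, w t - x⟫ * (2 * (α / r t))
        ≤ ‖w t - x‖ ^ 2 - ‖w (t + 1) - x‖ ^ 2 + (α / r t) ^ 2 * ‖G t‖ ^ 2 := by
      nlinarith [hproj2]
    have hdiv := (le_div_iff₀ (by positivity : 0 < 2 * (α / r t))).2 hI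
    have heq : (‖w t - x‖ ^ 2 - ‖w (t + 1) - x‖ ^ 2 + (α / r t) ^ 2 * ‖G t‖ ^ 2)
        / (2 * (α / r t))
        = (‖w t - x‖ ^ 2 - ‖w (t + 1) - x‖ ^ 2) * r t / (2 * α)
          + α / 2 * (‖G t‖ ^ 2 / r t) := by
      have hr0 : r t ≠ 0 := (hrpos t).ne'
      field_simp
    rw [heq] at hdiv
    linarith
  -- first summation claim
  have claim1 : ∀ n, a ≤ n →
      ∑ t ∈ Finset.Icc a n, (‖w t - x‖ ^ 2 - ‖w (t + 1) - x‖ ^ 2) * r t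
        ≤ (D ^ 2 - ‖w (n + 1) - x‖ ^ 2) * r n := by
    intro n hn
    induction n, hn using Nat.le_induction with
    | base =>
      rw [Finset.Icc_self, Finset.sum_singleton]
      have h1 := hAle a le_rfl
      have h2 := (hrpos a).le
      nlinarith [mul_nonneg (sub_nonneg.2 h1) h2]
    | succ n hn ih =>
      rw [Finset.sum_Icc_succ_top (Nat.le_succ_of_le hn)]
      have hA1 := hAle (n + 1) (Nat.le_succ_of_le hn)
      have hrm := hrmono n (Nat.le_succ_of_le hn)
      nlinarith [mul_le_mul_of_nonneg_left hrm (sub_nonneg.2 hA1)]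
  -- second summation claim
  have claim2 : ∀ n, a ≤ n →
      ∑ t ∈ Finset.Icc a n, ‖G t‖ ^ 2 / r t ≤ 2 * (r n - Real.sqrt δ) := by
    intro n hn
    induction n, hn using Nat.le_induction with
    | base =>
      rw [Finset.Icc_self, Finset.sum_singleton]
      have hSa : S a = δ + ‖G a‖ ^ 2 := by
        have hdef : S a = δ + ∑ u ∈ Finset.Icc a a, ‖G u‖ ^ 2 := rfl
        rw [hdef, Finset.Icc_self, Finset.sum_singleton]
      have hstep' := sogd_sqrt_step δ (S a) hδ (by rw [hSa]; nlinarith [sq_nonneg ‖G a‖])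
      rw [hr] at hstep'
      have hga : ‖G a‖ ^ 2 = S a - δ := by rw [hSa]; ring
      rw [hga]
      exact hstep'
    | succ n hn ih =>
      rw [Finset.sum_Icc_succ_top (Nat.le_succ_of_le hn)]
      have hSle : S n ≤ S (n + 1) := by
        rw [hSsucc n (Nat.le_succ_of_le hn)]
        nlinarith [sq_nonneg ‖G (n + 1)‖]
      have hstep' := sogd_sqrt_step (S n) (S (n + 1)) (hSpos n) hSle
      rw [hr, hr] at hstep'
      have hg : ‖G (n + 1)‖ ^ 2 = S (n + 1) - S n := by
        rw [hSsucc n (Nat.le_succ_of_le hn)]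
        ring
      rw [hg]
      linarith
  -- regret bound
  set L : ℝ := ∑ u ∈ Finset.Icc a b, f u (w u) with hLdef
  set R : ℝ := ∑ u ∈ Finset.Icc a b, f u x with hRdef
  have hLnn : 0 ≤ L := Finset.sum_nonneg fun u _ => hnonneg u (w u)
  have hRnn : 0 ≤ R := Finset.sum_nonneg fun u _ => hnonneg u x
  have hregret : L - R ≤ Real.sqrt 2 * D * r b := by
    rw [hLdef, hRdef, ← Finset.sum_sub_distrib]
    have h1 : ∑ t ∈ Finset.Icc a b, (f t (w t) - f t x)
        ≤ ∑ t ∈ Finset.Icc a b, ((‖w t - x‖ ^ 2 - ‖w (t + 1) - x‖ ^ 2) * r t / (2 * α)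
            + α / 2 * (‖G t‖ ^ 2 / r t)) :=
      Finset.sum_le_sum fun t ht => hstep t (Finset.mem_Icc.1 ht).1
    rw [Finset.sum_add_distrib, ← Finset.sum_div, ← Finset.mul_sum] at h1
    have h2 : (∑ t ∈ Finset.Icc a b, (‖w t - x‖ ^ 2 - ‖w (t + 1) - x‖ ^ 2) * r t) / (2 * α)
        ≤ ((D ^ 2 - ‖w (b + 1) - x‖ ^ 2) * r b) / (2 * α) :=
      (div_le_div_iff_of_pos_right (by positivity)).2 (claim1 b hab)
    have h3 : α / 2 * (∑ t ∈ Finset.Icc a b, ‖G t‖ ^ 2 / r t)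
        ≤ α / 2 * (2 * (r b - Real.sqrt δ)) :=
      mul_le_mul_of_nonneg_left (claim2 b hab) (by positivity)
    have hD2 : D ^ 2 = 2 * α ^ 2 := by
      rw [hα, div_pow, Real.sq_sqrt (by norm_num : (0:ℝ) ≤ 2)]
      ring
    have hkey1 : Real.sqrt 2 * D = 2 * α := by
      rw [hα, mul_div_assoc', eq_div_iff (ne_of_gt hs2)]
      linear_combination D * h2s
    have hb1 : (0:ℝ) ≤ ‖w (b + 1) - x‖ ^ 2 := sq_nonneg _
    have hδs : (0:ℝ) ≤ Real.sqrt δ := Real.sqrt_nonneg δ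
    have hrb : (0:ℝ) ≤ r b := (hrpos b).le
    have h5 : ((D ^ 2 - ‖w (b + 1) - x‖ ^ 2) * r b) / (2 * α) ≤ α * r b := by
      rw [div_le_iff₀ (by positivity : (0:ℝ) < 2 * α)]
      nlinarith [mul_nonneg hb1 hrb]
    have h6 : α / 2 * (2 * (r b - Real.sqrt δ)) ≤ α * r b := by
      nlinarith [mul_nonneg hαpos.le hδs]
    have h7 : Real.sqrt 2 * D * r b = 2 * α * r b := by rw [hkey1]
    linarith
  -- self-bounding bound on S b
  have hSb : S b ≤ δ + 2 * H * L := by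
    have hsb : ∀ u ∈ Finset.Icc a b, ‖G u‖ ^ 2 ≤ 2 * H * f u (w u) := fun u _ =>
      sogd_selfbound (f u) (hdiff u) (hnonneg u) H hH (fun p q => hsmooth u p q) (w u)
    have hsum2 := Finset.sum_le_sum hsb
    rw [← Finset.mul_sum, ← hLdef] at hsum2
    have hSbdef : S b = δ + ∑ u ∈ Finset.Icc a b, ‖G u‖ ^ 2 := rfl
    linarith [hSbdef.le, hSbdef.ge]
  -- final arithmetic
  set q := Real.sqrt (2 * δ) with hqdef
  have hqnn : 0 ≤ q := Real.sqrt_nonneg _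
  have hqsq : q ^ 2 = 2 * δ := Real.sq_sqrt (by positivity)
  have hc1 : 20 * H * D ^ 2 ≤ C := by
    nlinarith [mul_nonneg (mul_nonneg (by norm_num : (0:ℝ) ≤ 2) hD0) hqnn]
  have h2Dq : 2 * D * q ≤ C := by
    nlinarith [mul_nonneg (mul_nonneg (by norm_num : (0:ℝ) ≤ 20) hH) (sq_nonneg D)]
  have hc2 : 8 * D ^ 2 * δ ≤ C ^ 2 := by
    have hmm := mul_self_le_mul_self (by positivity : (0:ℝ) ≤ 2 * D * q) h2Dq
    nlinarith [hqsq]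
  set Y := r b with hYdef
  have hYnn : 0 ≤ Y := (hrpos b).le
  have hY2 : Y ^ 2 ≤ δ + 2 * H * L := by
    have hy : Y ^ 2 = S b := Real.sq_sqrt (hSpos b).le
    linarith
  set X := Real.sqrt 2 * D * Y with hXdef
  have hXnn : 0 ≤ X := by positivity
  have hX2 : X ^ 2 ≤ 2 * D ^ 2 * δ + 4 * D ^ 2 * H * L := by
    have hx2 : X ^ 2 = 2 * D ^ 2 * Y ^ 2 := by
      rw [hXdef, mul_pow, mul_pow, Real.sq_sqrt (by norm_num : (0:ℝ) ≤ 2)]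
      try ring
    nlinarith [mul_le_mul_of_nonneg_left hY2 (by positivity : (0:ℝ) ≤ 2 * D ^ 2)]
  have hA : 6 * C / 5 * (L - R) ≤ 6 * C / 5 * X :=
    mul_le_mul_of_nonneg_left hregret (by positivity)
  have hB : 6 * C / 5 * X ≤ X ^ 2 + 9 * C ^ 2 / 25 := by
    nlinarith [sq_nonneg (X - 3 * C / 5)]
  have hD2HL : 4 * D ^ 2 * H * L ≤ C / 5 * L := by
    nlinarith [mul_le_mul_of_nonneg_right hc1 hLnn]
  have hCL : C * C ≤ C * L := mul_le_mul_of_nonneg_left hloss hCpos.le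
  nlinarith [hA, hB, hX2, hc2, hD2HL, hCL, hCpos]
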